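/- Let u, β : [z₁, z₂] → ℝ with β ≥ 0 somewhere, and let (k, c) with k > 0, c ∈ ℝ be a neutral mode: there exists a nontrivial C² solution w of w′′ + (−k² − u″/(u−c) + gβ/(u−c)²)·w = 0 with w(z₁)=0=w(z₂), where u(z) ≠ c on [z₁,z₂]. Then |u(z) − c|²_min < g·β_max·(z₂ − z₁)²/π², hence u_min − α < c < u_max + α where α = √(g·β_max)·(z₂ − z₁)/π. -/

import Mathlib

open Real
open Real intervalIntegral MeasureTheory Set Filter Topology

lemma poincare_aux {a b : ℝ} (hab : a < b) (φ φ' : ℝ → ℝ)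
    (hd : ∀ z ∈ Set.Icc a b, HasDerivAt φ (φ' z) z)
    (hc' : ContinuousOn φ' (Set.Icc a b))
    (h0 : φ a = 0) (h1 : φ b = 0) :
    (π / (b - a))^2 * ∫ z in a..b, (φ z)^2 ≤ ∫ z in a..b, (φ' z)^2 := by
  have hL : (0:ℝ) < b - a := by linarith
  set ν : ℝ := π / (b - a) with hνdef
  have hν : 0 < ν := div_pos pi_pos hL
  have hφc : ContinuousOn φ (Set.Icc a b) :=
    fun z hz => ((hd z hz).continuousAt).continuousWithinAt
  set g : ℝ → ℝ := fun z => (φ' z)^2 - ν^2 * (φ z)^2 with hgdef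
  have hgc : ContinuousOn g (Set.Icc a b) := by
    exact (hc'.pow 2).sub (continuousOn_const.mul (hφc.pow 2))
  obtain ⟨K, hK⟩ := isCompact_Icc.exists_bound_of_continuousOn hgc
  -- sθ, cθ, G
  set sθ : ℝ → ℝ := fun z => Real.sin (ν * (z - a)) with hsθdef
  set cθ : ℝ → ℝ := fun z => Real.cos (ν * (z - a)) with hcθdef
  have hsθpos : ∀ z ∈ Set.Ioo a b, 0 < sθ z := by
    intro z hz
    apply Real.sin_pos_of_pos_of_lt_pi
    · exact mul_pos hν (by linarith [hz.1])
    · have : ν * (z - a) < ν * (b - a) := by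
        apply mul_lt_mul_of_pos_left _ hν; linarith [hz.2]
      calc ν * (z - a) < ν * (b - a) := this
        _ = π := by rw [hνdef]; field_simp
  set G : ℝ → ℝ := fun z => ν * (cθ z / sθ z) * (φ z)^2 with hGdef
  -- derivative of G
  set Gd : ℝ → ℝ := fun z => ν * (-ν / (sθ z)^2) * (φ z)^2
      + ν * (cθ z / sθ z) * (2 * φ z * φ' z) with hGddef
  have hGderiv : ∀ z ∈ Set.Ioo a b, HasDerivAt G (Gd z) z := by
    intro z hz
    have hzI : z ∈ Set.Icc a b := Set.mem_Icc_of_Ioo hz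
    have hθ : HasDerivAt (fun z : ℝ => ν * (z - a)) ν z := by
      simpa using ((hasDerivAt_id z).sub_const a).const_mul ν
    have hsin : HasDerivAt sθ (cθ z * ν) z := (Real.hasDerivAt_sin _).comp z hθ
    have hcos : HasDerivAt cθ (-sθ z * ν) z := (Real.hasDerivAt_cos _).comp z hθ
    have hsne : sθ z ≠ 0 := (hsθpos z hz).ne'
    have hquot : HasDerivAt (fun z => cθ z / sθ z)
        ((-sθ z * ν * sθ z - cθ z * (cθ z * ν)) / (sθ z)^2) z := hcos.div hsin hsne
    have hquot' : HasDerivAt (fun z => cθ z / sθ z) (-ν / (sθ z)^2) z := by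
      convert hquot using 1
      have hpyth : (sθ z)^2 + (cθ z)^2 = 1 := Real.sin_sq_add_cos_sq _
      rw [show -sθ z * ν * sθ z - cθ z * (cθ z * ν) = -ν by linear_combination (-ν) * hpyth]
    have hphi2 : HasDerivAt (fun z => (φ z)^2) (2 * φ z * φ' z) z := by
      simpa [mul_comm, mul_assoc] using (hd z hzI).fun_pow 2
    simpa [hGddef] using (hquot'.const_mul ν).fun_mul hphi2
  -- pointwise inequality integrated: for x,y in Ioo, x ≤ y
  have claim1 : ∀ x ∈ Set.Ioo a b, ∀ y ∈ Set.Ioo a b, x ≤ y →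
      G y - G x ≤ ∫ z in x..y, g z := by
    intro x hx y hy hxy
    have hsub : Set.Icc x y ⊆ Set.Ioo a b := Set.Icc_subset_Ioo hx.1 hy.2
    have hsubI : Set.Icc x y ⊆ Set.Icc a b := hsub.trans Set.Ioo_subset_Icc_self
    have hGdc : ContinuousOn Gd (Set.Icc x y) := by
      have hφcxy : ContinuousOn φ (Set.Icc x y) := hφc.mono hsubI
      have hφ'cxy : ContinuousOn φ' (Set.Icc x y) := hc'.mono hsubI
      have hsc : ContinuousOn sθ (Set.Icc x y) := (Real.continuous_sin.comp
        (continuous_const.mul (continuous_id.sub continuous_const))).continuousOn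
      have hcc : ContinuousOn cθ (Set.Icc x y) := (Real.continuous_cos.comp
        (continuous_const.mul (continuous_id.sub continuous_const))).continuousOn
      have hsne : ∀ z ∈ Set.Icc x y, sθ z ≠ 0 := fun z hz => (hsθpos z (hsub hz)).ne'
      apply ContinuousOn.add
      · exact (continuousOn_const.mul ((continuousOn_const.div (hsc.pow 2)
          (fun z hz => pow_ne_zero 2 (hsne z hz)))) ).mul (hφcxy.pow 2)
      · exact (continuousOn_const.mul (hcc.div hsc hsne)).mul
          ((continuousOn_const.mul hφcxy).mul hφ'cxy)
    have huIcc : Set.uIcc x y = Set.Icc x y := Set.uIcc_of_le hxy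
    have hftc : ∫ z in x..y, Gd z = G y - G x := by
      apply intervalIntegral.integral_eq_sub_of_hasDerivAt
      · intro z hz; exact hGderiv z (hsub (huIcc ▸ hz))
      · exact (hGdc.mono (by rw [huIcc])).intervalIntegrable
    have hgint : IntervalIntegrable g volume x y :=
      (hgc.mono hsubI).intervalIntegrable_of_Icc hxy
    have hGdint : IntervalIntegrable Gd volume x y :=
      hGdc.intervalIntegrable_of_Icc hxy
    have hnonneg : 0 ≤ ∫ z in x..y, (g z - Gd z) := by
      rw [intervalIntegral.integral_of_le hxy]
      apply MeasureTheory.setIntegral_nonneg measurableSet_Ioc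
      intro z hz
      have hzI : z ∈ Set.Icc x y := Set.mem_Icc_of_Ioc hz
      have hsne : sθ z ≠ 0 := (hsθpos z (hsub hzI)).ne'
      have key : g z - Gd z = (φ' z - ν * (cθ z / sθ z) * φ z)^2 := by
        have hpyth : (sθ z)^2 + (cθ z)^2 = 1 := Real.sin_sq_add_cos_sq _
        simp only [hgdef, hGddef]
        have hc2 : cθ z ^ 2 = 1 - sθ z ^ 2 := by linarith
        have hq : (cθ z / sθ z)^2 = 1/sθ z^2 - 1 := by
          rw [div_pow, hc2, sub_div, div_self (pow_ne_zero 2 hsne)]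
        linear_combination (-(ν^2 * φ z^2)) * hq
      rw [key]; positivity
    have := intervalIntegral.integral_sub hgint hGdint
    rw [this, hftc] at hnonneg
    linarith
  -- splitting estimate
  have key : ∀ x ∈ Set.Ioo a b, ∀ y ∈ Set.Ioo a b, x ≤ y →
      G y - G x - K*(x-a) - K*(b-y) ≤ ∫ z in a..b, g z := by
    intro x hx y hy hxy
    have gI1 : IntervalIntegrable g volume a x :=
      (hgc.mono (Set.Icc_subset_Icc le_rfl hx.2.le)).intervalIntegrable_of_Icc hx.1.le
    have gI2 : IntervalIntegrable g volume x y :=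
      (hgc.mono (Set.Icc_subset_Icc hx.1.le hy.2.le)).intervalIntegrable_of_Icc hxy
    have gI3 : IntervalIntegrable g volume y b :=
      (hgc.mono (Set.Icc_subset_Icc hy.1.le le_rfl)).intervalIntegrable_of_Icc hy.2.le
    have hsplit : (∫ z in a..b, g z) = (∫ z in a..x, g z) + (∫ z in x..y, g z)
        + (∫ z in y..b, g z) := by
      rw [intervalIntegral.integral_add_adjacent_intervals gI1 gI2,
        intervalIntegral.integral_add_adjacent_intervals (gI1.trans gI2) gI3]
    have hb1 : ‖∫ z in a..x, g z‖ ≤ K * |x - a| := by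
      apply intervalIntegral.norm_integral_le_of_norm_le_const
      intro z hz
      rw [Set.uIoc_of_le hx.1.le] at hz
      exact hK z ⟨hz.1.le, hz.2.trans hx.2.le⟩
    have hb3 : ‖∫ z in y..b, g z‖ ≤ K * |b - y| := by
      apply intervalIntegral.norm_integral_le_of_norm_le_const
      intro z hz
      rw [Set.uIoc_of_le hy.2.le] at hz
      exact hK z ⟨hy.1.le.trans hz.1.le, hz.2⟩
    rw [abs_of_nonneg (by linarith [hx.1] : (0:ℝ) ≤ x - a)] at hb1
    rw [abs_of_nonneg (by linarith [hy.2] : (0:ℝ) ≤ b - y)] at hb3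
    have hmid := claim1 x hx y hy hxy
    rw [hsplit]
    rw [Real.norm_eq_abs] at hb1 hb3
    have e1 : -(K*(x-a)) ≤ ∫ z in a..x, g z := by
      have := neg_abs_le (∫ z in a..x, g z); linarith
    have e3 : -(K*(b-y)) ≤ ∫ z in y..b, g z := by
      have := neg_abs_le (∫ z in y..b, g z); linarith
    linarith
  -- boundary limits
  have hscont : Continuous sθ := Real.continuous_sin.comp
      (continuous_const.mul (continuous_id.sub continuous_const))
  have hccont : Continuous cθ := Real.continuous_cos.comp
      (continuous_const.mul (continuous_id.sub continuous_const))
  have hsθa : sθ a = 0 := by simp [hsθdef]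
  have hcθa : cθ a = 1 := by simp [hcθdef]
  have hsθb : sθ b = 0 := by
    simp only [hsθdef]
    rw [show ν * (b - a) = π by rw [hνdef]; field_simp]
    exact Real.sin_pi
  have hcθb : cθ b = -1 := by
    simp only [hcθdef]
    rw [show ν * (b - a) = π by rw [hνdef]; field_simp]
    exact Real.cos_pi
  have hsda : HasDerivAt sθ ν a := by
    have hθ : HasDerivAt (fun z : ℝ => ν * (z - a)) ν a := by
      simpa using ((hasDerivAt_id a).sub_const a).const_mul ν
    have := (Real.hasDerivAt_sin (ν * (a - a))).comp a hθ
    have h' : HasDerivAt sθ (Real.cos (ν * (a - a)) * ν) a := this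
    simpa using h'
  have hsdb : HasDerivAt sθ (-ν) b := by
    have hθ : HasDerivAt (fun z : ℝ => ν * (z - a)) ν b := by
      simpa using ((hasDerivAt_id b).sub_const a).const_mul ν
    have := (Real.hasDerivAt_sin (ν * (b - a))).comp b hθ
    rw [show ν * (b - a) = π by rw [hνdef]; field_simp] at this
    have h' : HasDerivAt sθ (Real.cos π * ν) b := this
    simpa using h'
  have limGa : Tendsto G (𝓝[>] a) (𝓝 0) := by
    have hda : HasDerivAt φ (φ' a) a := hd a ⟨le_refl a, le_of_lt hab⟩
    have l1 : Tendsto (fun x => φ x / (x - a)) (𝓝[>] a) (𝓝 (φ' a)) := by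
      have h2 : Tendsto (slope φ a) (𝓝[>] a) (𝓝 (φ' a)) :=
        (hasDerivAt_iff_tendsto_slope.mp hda).mono_left
          (nhdsWithin_mono a fun x hx => ne_of_gt hx)
      refine h2.congr fun x => ?_
      rw [slope_def_field, h0, sub_zero]
    have l2 : Tendsto (fun x => sθ x / (x - a)) (𝓝[>] a) (𝓝 ν) := by
      have h2 : Tendsto (slope sθ a) (𝓝[>] a) (𝓝 ν) :=
        (hasDerivAt_iff_tendsto_slope.mp hsda).mono_left
          (nhdsWithin_mono a fun x hx => ne_of_gt hx)
      refine h2.congr fun x => ?_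
      rw [slope_def_field, hsθa, sub_zero]
    have l2' : Tendsto (fun x => (x - a) / sθ x) (𝓝[>] a) (𝓝 ν⁻¹) := by
      have := l2.inv₀ (ne_of_gt hν)
      refine this.congr fun x => ?_
      rw [inv_div]
    have l3 : Tendsto φ (𝓝[>] a) (𝓝 0) := by
      have := hda.continuousAt.tendsto.mono_left (nhdsWithin_le_nhds : 𝓝[>] a ≤ 𝓝 a)
      rwa [h0] at this
    have l4 : Tendsto cθ (𝓝[>] a) (𝓝 1) := by
      have := hccont.continuousAt.tendsto.mono_left (nhdsWithin_le_nhds : 𝓝[>] a ≤ 𝓝 a)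
      rwa [hcθa] at this
    have comb : Tendsto (fun x => ν * cθ x * (φ x / (x - a)) * φ x * ((x - a) / sθ x))
        (𝓝[>] a) (𝓝 (ν * 1 * φ' a * 0 * ν⁻¹)) :=
      (((tendsto_const_nhds.mul l4).mul l1).mul l3).mul l2'
    rw [show ν * 1 * φ' a * 0 * ν⁻¹ = 0 by ring] at comb
    apply comb.congr'
    filter_upwards [Ioo_mem_nhdsGT_of_mem (by constructor <;> [exact le_refl a; exact hab])]
      with x hx
    have h1 : x - a ≠ 0 := by have := hx.1; intro h; linarith [this]
    have h2 : sθ x ≠ 0 := (hsθpos x hx).ne'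
    simp only [hGdef]
    field_simp
  have limGb : Tendsto G (𝓝[<] b) (𝓝 0) := by
    have hdb : HasDerivAt φ (φ' b) b := hd b ⟨le_of_lt hab, le_refl b⟩
    have l1 : Tendsto (fun x => φ x / (x - b)) (𝓝[<] b) (𝓝 (φ' b)) := by
      have h2 : Tendsto (slope φ b) (𝓝[<] b) (𝓝 (φ' b)) :=
        (hasDerivAt_iff_tendsto_slope.mp hdb).mono_left
          (nhdsWithin_mono b fun x hx => ne_of_lt hx)
      refine h2.congr fun x => ?_
      rw [slope_def_field, h1, sub_zero]
    have l2 : Tendsto (fun x => sθ x / (x - b)) (𝓝[<] b) (𝓝 (-ν)) := by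
      have h2 : Tendsto (slope sθ b) (𝓝[<] b) (𝓝 (-ν)) :=
        (hasDerivAt_iff_tendsto_slope.mp hsdb).mono_left
          (nhdsWithin_mono b fun x hx => ne_of_lt hx)
      refine h2.congr fun x => ?_
      rw [slope_def_field, hsθb, sub_zero]
    have l2' : Tendsto (fun x => (x - b) / sθ x) (𝓝[<] b) (𝓝 (-ν)⁻¹) := by
      have := l2.inv₀ (by simpa using ne_of_gt hν)
      refine this.congr fun x => ?_
      rw [inv_div]
    have l3 : Tendsto φ (𝓝[<] b) (𝓝 0) := by
      have := hdb.continuousAt.tendsto.mono_left (nhdsWithin_le_nhds : 𝓝[<] b ≤ 𝓝 b)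
      rwa [h1] at this
    have l4 : Tendsto cθ (𝓝[<] b) (𝓝 (-1)) := by
      have := hccont.continuousAt.tendsto.mono_left (nhdsWithin_le_nhds : 𝓝[<] b ≤ 𝓝 b)
      rwa [hcθb] at this
    have comb : Tendsto (fun x => ν * cθ x * (φ x / (x - b)) * φ x * ((x - b) / sθ x))
        (𝓝[<] b) (𝓝 (ν * (-1) * φ' b * 0 * (-ν)⁻¹)) :=
      (((tendsto_const_nhds.mul l4).mul l1).mul l3).mul l2'
    rw [show ν * (-1) * φ' b * 0 * (-ν)⁻¹ = 0 by ring] at comb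
    apply comb.congr'
    filter_upwards [Ioo_mem_nhdsLT_of_mem (by constructor <;> [exact hab; exact le_refl b])]
      with x hx
    have hx1 : x - b ≠ 0 := by have := hx.2; intro h; linarith [this]
    have hx2 : sθ x ≠ 0 := (hsθpos x hx).ne'
    simp only [hGdef]
    field_simp
  -- step 1: for each x in Ioo a b
  have step1 : ∀ x ∈ Set.Ioo a b, -G x - K*(x-a) ≤ ∫ z in a..b, g z := by
    intro x hx
    have t0 : Tendsto (fun y : ℝ => G y - G x - K*(x-a) - K*(b-y)) (𝓝[<] b)
        (𝓝 (0 - G x - K*(x-a) - K*(b-b))) := by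
      refine ((limGb.sub tendsto_const_nhds).sub tendsto_const_nhds).sub ?_
      exact ((continuous_const.mul (continuous_const.sub continuous_id)).tendsto b).mono_left
        (nhdsWithin_le_nhds : 𝓝[<] b ≤ 𝓝 b)
    have hev : ∀ᶠ y in 𝓝[<] b, G y - G x - K*(x-a) - K*(b-y) ≤ ∫ z in a..b, g z := by
      filter_upwards [Ioo_mem_nhdsLT_of_mem (by constructor <;> [exact hx.2; exact le_refl b] :
          b ∈ Set.Ioc x b)] with y hy
      exact key x hx y ⟨hx.1.trans hy.1, hy.2⟩ hy.1.le
    have := le_of_tendsto t0 hev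
    simp only [sub_self, mul_zero, zero_sub, sub_zero] at this
    linarith
  -- step 2
  have step2 : (0:ℝ) ≤ ∫ z in a..b, g z := by
    have t0 : Tendsto (fun x : ℝ => -G x - K*(x-a)) (𝓝[>] a) (𝓝 (-0 - K*(a-a))) := by
      refine (limGa.neg).sub ?_
      exact ((continuous_const.mul (continuous_id.sub continuous_const)).tendsto a).mono_left
        (nhdsWithin_le_nhds : 𝓝[>] a ≤ 𝓝 a)
    have hev : ∀ᶠ x in 𝓝[>] a, -G x - K*(x-a) ≤ ∫ z in a..b, g z := by
      filter_upwards [Ioo_mem_nhdsGT_of_mem (by constructor <;> [exact le_refl a; exact hab] :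
          a ∈ Set.Ico a b)] with x hx
      exact step1 x hx
    have := le_of_tendsto t0 hev
    simpa using this
  -- conclude
  have hint1 : IntervalIntegrable (fun z => (φ' z)^2) volume a b :=
    ((hc'.pow 2)).intervalIntegrable_of_Icc hab.le
  have hint2 : IntervalIntegrable (fun z => ν^2 * (φ z)^2) volume a b :=
    (continuousOn_const.mul (hφc.pow 2)).intervalIntegrable_of_Icc hab.le
  have : (∫ z in a..b, g z) = (∫ z in a..b, (φ' z)^2) - ∫ z in a..b, ν^2 * (φ z)^2 :=
    intervalIntegral.integral_sub hint1 hint2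
  rw [this, intervalIntegral.integral_const_mul] at step2
  linarith

lemma poincareC {a b : ℝ} (hab : a < b) (h hd : ℝ → ℂ)
    (hder : ∀ z ∈ Set.Icc a b, HasDerivAt h (hd z) z)
    (hc' : ContinuousOn hd (Set.Icc a b))
    (h0 : h a = 0) (h1 : h b = 0) :
    (π / (b - a))^2 * ∫ z in a..b, Complex.normSq (h z) ≤
      ∫ z in a..b, Complex.normSq (hd z) := by
  have hhc : ContinuousOn h (Set.Icc a b) :=
    fun z hz => (hder z hz).continuousAt.continuousWithinAt
  have hre : ∀ z ∈ Set.Icc a b, HasDerivAt (fun z => (h z).re) ((hd z).re) z := fun z hz =>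
    (Complex.reCLM.hasFDerivAt.comp_hasDerivAt z (hder z hz))
  have him : ∀ z ∈ Set.Icc a b, HasDerivAt (fun z => (h z).im) ((hd z).im) z := fun z hz =>
    (Complex.imCLM.hasFDerivAt.comp_hasDerivAt z (hder z hz))
  have P1 := poincare_aux hab _ _ hre (Complex.continuous_re.comp_continuousOn hc')
    (by simp [h0]) (by simp [h1])
  have P2 := poincare_aux hab _ _ him (Complex.continuous_im.comp_continuousOn hc')
    (by simp [h0]) (by simp [h1])
  have i1 : IntervalIntegrable (fun z => ((h z).re)^2) volume a b :=
    ((Complex.continuous_re.comp_continuousOn hhc).pow 2).intervalIntegrable_of_Icc hab.le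
  have i2 : IntervalIntegrable (fun z => ((h z).im)^2) volume a b :=
    ((Complex.continuous_im.comp_continuousOn hhc).pow 2).intervalIntegrable_of_Icc hab.le
  have i3 : IntervalIntegrable (fun z => ((hd z).re)^2) volume a b :=
    ((Complex.continuous_re.comp_continuousOn hc').pow 2).intervalIntegrable_of_Icc hab.le
  have i4 : IntervalIntegrable (fun z => ((hd z).im)^2) volume a b :=
    ((Complex.continuous_im.comp_continuousOn hc').pow 2).intervalIntegrable_of_Icc hab.le
  have e1 : (∫ z in a..b, Complex.normSq (h z))
      = (∫ z in a..b, ((h z).re)^2) + ∫ z in a..b, ((h z).im)^2 := by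
    rw [← intervalIntegral.integral_add i1 i2]
    apply intervalIntegral.integral_congr
    intro z _; simp only [Complex.normSq_apply]; ring
  have e2 : (∫ z in a..b, Complex.normSq (hd z))
      = (∫ z in a..b, ((hd z).re)^2) + ∫ z in a..b, ((hd z).im)^2 := by
    rw [← intervalIntegral.integral_add i3 i4]
    apply intervalIntegral.integral_congr
    intro z _; simp only [Complex.normSq_apply]; ring
  rw [e1, e2, mul_add]
  exact add_le_add P1 P2

set_option maxHeartbeats 1000000 in
theorem stmt_15 (z₁ z₂ g k c : ℝ) (hz : z₁ < z₂) (hg : 0 < g) (hk : 0 < k)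
    (u u' u'' β : ℝ → ℝ)
    (hu : ∀ z ∈ Set.Icc z₁ z₂, HasDerivAt u (u' z) z)
    (hu' : ∀ z ∈ Set.Icc z₁ z₂, HasDerivAt u' (u'' z) z)
    (hucont : ContinuousOn u'' (Set.Icc z₁ z₂))
    (hβ : ContinuousOn β (Set.Icc z₁ z₂))
    (hβpos : ∃ z ∈ Set.Icc z₁ z₂, 0 ≤ β z)
    (hne : ∀ z ∈ Set.Icc z₁ z₂, u z ≠ c)
    (w w' w'' : ℝ → ℂ)
    (hw : ∀ z ∈ Set.Icc z₁ z₂, HasDerivAt w (w' z) z)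
    (hw' : ∀ z ∈ Set.Icc z₁ z₂, HasDerivAt w' (w'' z) z)
    (hwcont : ContinuousOn w'' (Set.Icc z₁ z₂))
    (heq : ∀ z ∈ Set.Icc z₁ z₂,
      w'' z + (-(k : ℂ) ^ 2 - (u'' z : ℂ) / ((u z : ℂ) - c)
        + (g * β z : ℂ) / ((u z : ℂ) - c) ^ 2) * w z = 0)
    (hbc1 : w z₁ = 0) (hbc2 : w z₂ = 0)
    (hwne : ∃ z ∈ Set.Icc z₁ z₂, w z ≠ 0) :
    sInf ((fun z => (u z - c) ^ 2) '' Set.Icc z₁ z₂) <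
      g * sSup (β '' Set.Icc z₁ z₂) * (z₂ - z₁) ^ 2 / π ^ 2 ∧
    sInf (u '' Set.Icc z₁ z₂) -
        Real.sqrt (g * sSup (β '' Set.Icc z₁ z₂)) * (z₂ - z₁) / π < c ∧
    c < sSup (u '' Set.Icc z₁ z₂) +
        Real.sqrt (g * sSup (β '' Set.Icc z₁ z₂)) * (z₂ - z₁) / π := by
  have hzle := hz.le
  have hI : Set.uIcc z₁ z₂ = Set.Icc z₁ z₂ := Set.uIcc_of_le hzle
  -- continuity basics
  have hucont' : ContinuousOn u (Set.Icc z₁ z₂) :=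
    fun z hz' => (hu z hz').continuousAt.continuousWithinAt
  have hu'cont : ContinuousOn u' (Set.Icc z₁ z₂) :=
    fun z hz' => (hu' z hz').continuousAt.continuousWithinAt
  have hwc : ContinuousOn w (Set.Icc z₁ z₂) :=
    fun z hz' => (hw z hz').continuousAt.continuousWithinAt
  have hw'c : ContinuousOn w' (Set.Icc z₁ z₂) :=
    fun z hz' => (hw' z hz').continuousAt.continuousWithinAt
  have hfne : ∀ z ∈ Set.Icc z₁ z₂, ((u z : ℂ) - c) ≠ 0 := by
    intro z hz'
    simp only [ne_eq, sub_eq_zero]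
    intro hh
    exact hne z hz' (by exact_mod_cast hh)
  have hfCc : ContinuousOn (fun z => (u z : ℂ) - (c:ℂ)) (Set.Icc z₁ z₂) :=
    (Complex.continuous_ofReal.comp_continuousOn hucont').sub continuousOn_const
  -- the transformed function h = w/(u-c)
  set h : ℝ → ℂ := fun z => w z / ((u z : ℂ) - c) with hhdef
  set hd : ℝ → ℂ := fun z =>
    (w' z * ((u z : ℂ) - c) - w z * (u' z : ℂ)) / ((u z : ℂ) - c)^2 with hddef
  have hder : ∀ z ∈ Set.Icc z₁ z₂, HasDerivAt h (hd z) z := fun z hz' =>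
    (hw z hz').div (((hu z hz').ofReal_comp).sub_const (c:ℂ)) (hfne z hz')
  have hhc : ContinuousOn h (Set.Icc z₁ z₂) := hwc.div hfCc hfne
  have hhdc : ContinuousOn hd (Set.Icc z₁ z₂) :=
    ((hw'c.mul hfCc).sub
      (hwc.mul (Complex.continuous_ofReal.comp_continuousOn hu'cont))).div
      (hfCc.pow 2) (fun z hz' => pow_ne_zero 2 (hfne z hz'))
  -- P and its derivative
  set P : ℝ → ℂ := fun z => w' z * ((u z : ℂ) - c) - w z * (u' z : ℂ) with hPdef
  set Pd : ℝ → ℂ := fun z =>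
    ((k:ℂ)^2 * ((u z : ℂ) - c)^2 - ((g * β z : ℝ) : ℂ)) * h z with hPddef
  have hPder : ∀ z ∈ Set.Icc z₁ z₂, HasDerivAt P (Pd z) z := by
    intro z hz'
    have h1 : HasDerivAt P (w'' z * ((u z:ℂ) - c) + w' z * (u' z:ℂ)
        - (w' z * (u' z:ℂ) + w z * (u'' z : ℂ))) z :=
      ((hw' z hz').mul (((hu z hz').ofReal_comp).sub_const (c:ℂ))).sub
        ((hw z hz').mul ((hu' z hz').ofReal_comp))
    convert h1 using 1
    have heqz := heq z hz'
    have hw'' : w'' z = ((k:ℂ)^2 + (u'' z:ℂ)/((u z:ℂ)-c)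
        - ((g * β z : ℝ):ℂ)/((u z:ℂ)-c)^2) * w z := by
      push_cast at heqz ⊢
      linear_combination heqz
    have hfx := hfne z hz'
    simp only [hPddef, hhdef]
    rw [hw'']
    field_simp
    ring
  have hPc : ContinuousOn P (Set.Icc z₁ z₂) :=
    (hw'c.mul hfCc).sub (hwc.mul (Complex.continuous_ofReal.comp_continuousOn hu'cont))
  have hPdc : ContinuousOn Pd (Set.Icc z₁ z₂) := by
    apply ContinuousOn.mul _ hhc
    exact (continuousOn_const.mul (hfCc.pow 2)).sub
      (Complex.continuous_ofReal.comp_continuousOn (continuousOn_const.mul hβ))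
  -- conjugates
  set V : ℝ → ℂ := fun z => star (h z) with hVdef
  set Vd : ℝ → ℂ := fun z => star (hd z) with hVddef
  have hVder : ∀ z ∈ Set.Icc z₁ z₂, HasDerivAt V (Vd z) z :=
    fun z hz' => (hder z hz').star
  have hVdc : ContinuousOn Vd (Set.Icc z₁ z₂) := continuous_star.comp_continuousOn hhdc
  -- integration by parts
  have hPdint : IntervalIntegrable Pd volume z₁ z₂ := hPdc.intervalIntegrable_of_Icc hzle
  have hVdint : IntervalIntegrable Vd volume z₁ z₂ := hVdc.intervalIntegrable_of_Icc hzle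
  have hibp := intervalIntegral.integral_mul_deriv_eq_deriv_mul
    (fun x hx => hPder x (hI ▸ hx)) (fun x hx => hVder x (hI ▸ hx)) hPdint hVdint
  have hh1 : h z₁ = 0 := by simp [hhdef, hbc1]
  have hh2 : h z₂ = 0 := by simp [hhdef, hbc2]
  have hV1 : V z₁ = 0 := by simp [hVdef, hh1]
  have hV2 : V z₂ = 0 := by simp [hVdef, hh2]
  rw [hV1, hV2, mul_zero, mul_zero, sub_zero, zero_sub] at hibp
  -- real-valued integrands
  set N : ℝ → ℝ := fun z => Complex.normSq (h z) with hNdef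
  set M : ℝ → ℝ := fun z => Complex.normSq (hd z) with hMdef
  have hNc : ContinuousOn N (Set.Icc z₁ z₂) := Complex.continuous_normSq.comp_continuousOn hhc
  have hMc : ContinuousOn M (Set.Icc z₁ z₂) := Complex.continuous_normSq.comp_continuousOn hhdc
  set f2 : ℝ → ℝ := fun z => (u z - c)^2 with hf2def
  have hf2c : ContinuousOn f2 (Set.Icc z₁ z₂) := ((hucont'.sub continuousOn_const).pow 2)
  have e_left : (∫ x in z₁..z₂, P x * Vd x)
      = ((∫ x in z₁..z₂, f2 x * M x : ℝ) : ℂ) := by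
    rw [← intervalIntegral.integral_ofReal]
    apply intervalIntegral.integral_congr
    intro x hx
    rw [hI] at hx
    have hfx := hfne x hx
    have hP : P x = ((u x:ℂ) - c)^2 * hd x := by
      simp only [hPdef, hddef]
      field_simp
    show P x * star (hd x) = _
    rw [hP, mul_assoc, Complex.star_def, Complex.mul_conj]
    simp only [hf2def, hMdef]
    push_cast
    ring
  have e_right : (∫ x in z₁..z₂, Pd x * V x)
      = ((∫ x in z₁..z₂, (k^2 * f2 x - g * β x) * N x : ℝ) : ℂ) := by
    rw [← intervalIntegral.integral_ofReal]
    apply intervalIntegral.integral_congr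
    intro x hx
    rw [hI] at hx
    show Pd x * star (h x) = _
    simp only [hPddef]
    rw [mul_assoc, Complex.star_def, Complex.mul_conj]
    simp only [hf2def, hNdef]
    push_cast
    ring
  rw [e_left, e_right, ← Complex.ofReal_neg] at hibp
  have hreal : (∫ x in z₁..z₂, f2 x * M x)
      = -∫ x in z₁..z₂, (k^2 * f2 x - g * β x) * N x := by
    exact_mod_cast hibp
  -- split RHS
  have if2N : IntervalIntegrable (fun x => f2 x * N x) volume z₁ z₂ :=
    (hf2c.mul hNc).intervalIntegrable_of_Icc hzle
  have iβN : IntervalIntegrable (fun x => β x * N x) volume z₁ z₂ :=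
    (hβ.mul hNc).intervalIntegrable_of_Icc hzle
  have if2M : IntervalIntegrable (fun x => f2 x * M x) volume z₁ z₂ :=
    (hf2c.mul hMc).intervalIntegrable_of_Icc hzle
  have iN : IntervalIntegrable N volume z₁ z₂ := hNc.intervalIntegrable_of_Icc hzle
  have iM : IntervalIntegrable M volume z₁ z₂ := hMc.intervalIntegrable_of_Icc hzle
  have hsplit : (∫ x in z₁..z₂, (k^2 * f2 x - g * β x) * N x)
      = k^2 * (∫ x in z₁..z₂, f2 x * N x) - g * ∫ x in z₁..z₂, β x * N x := by
    rw [← intervalIntegral.integral_const_mul, ← intervalIntegral.integral_const_mul,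
      ← intervalIntegral.integral_sub (if2N.const_mul _) (iβN.const_mul _)]
    apply intervalIntegral.integral_congr
    intro x _; ring
  have hmain : (∫ x in z₁..z₂, f2 x * M x) + k^2 * (∫ x in z₁..z₂, f2 x * N x)
      = g * ∫ x in z₁..z₂, β x * N x := by
    rw [hreal, hsplit]; ring
  -- positivity of the integral of N
  obtain ⟨z₀, hz₀I, hwz₀⟩ := hwne
  have hNnonneg : ∀ x, 0 ≤ N x := fun x => Complex.normSq_nonneg _
  have hMnonneg : ∀ x, 0 ≤ M x := fun x => Complex.normSq_nonneg _
  have hz₀1 : z₁ < z₀ := by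
    rcases lt_or_eq_of_le hz₀I.1 with hlt | heqz
    · exact hlt
    · exact absurd (heqz ▸ hbc1) hwz₀
  have hz₀2 : z₀ < z₂ := by
    rcases lt_or_eq_of_le hz₀I.2 with hlt | heqz
    · exact hlt
    · exact absurd (heqz ▸ hbc2) hwz₀
  have hNz₀ : 0 < N z₀ := by
    have hne0 : h z₀ ≠ 0 := div_ne_zero hwz₀ (hfne z₀ hz₀I)
    simpa [hNdef] using Complex.normSq_pos.mpr hne0
  have hNat : ContinuousAt N z₀ :=
    Complex.continuous_normSq.continuousAt.comp (hder z₀ hz₀I).continuousAt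
  have hev : ∀ᶠ x in nhds z₀, 0 < N x := hNat.eventually (eventually_gt_nhds hNz₀)
  obtain ⟨ε, hε, hball⟩ := Metric.eventually_nhds_iff.mp hev
  set x₀ := max z₁ (z₀ - ε/2) with hx₀def
  set y₀ := min z₂ (z₀ + ε/2) with hy₀def
  have hx₀1 : z₁ ≤ x₀ := le_max_left _ _
  have hy₀2 : y₀ ≤ z₂ := min_le_left _ _
  have hx₀z : x₀ < z₀ := max_lt hz₀1 (by linarith)
  have hzy₀ : z₀ < y₀ := lt_min hz₀2 (by linarith)
  have hNpos_on : ∀ x ∈ Set.Ioo x₀ y₀, 0 < N x := by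
    intro x hx
    apply hball
    rw [Real.dist_eq, abs_lt]
    have e1 := le_max_right z₁ (z₀ - ε/2)
    have e2 := min_le_right z₂ (z₀ + ε/2)
    have := hx.1; have := hx.2
    constructor <;> [linarith [hx.1, e1]; linarith [hx.2, e2]]
  have hNmid_int : IntervalIntegrable N volume x₀ y₀ := by
    apply iN.mono_set
    rw [hI, Set.uIcc_of_le (hx₀z.trans hzy₀).le]
    exact Set.Icc_subset_Icc hx₀1 hy₀2
  have hpos_mid : 0 < ∫ x in x₀..y₀, N x :=
    intervalIntegral.intervalIntegral_pos_of_pos_on hNmid_int hNpos_on (hx₀z.trans hzy₀)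
  have iN1 : IntervalIntegrable N volume z₁ x₀ := by
    apply iN.mono_set
    rw [hI, Set.uIcc_of_le hx₀1]
    exact Set.Icc_subset_Icc le_rfl (by linarith)
  have iN3 : IntervalIntegrable N volume y₀ z₂ := by
    apply iN.mono_set
    rw [hI, Set.uIcc_of_le hy₀2]
    exact Set.Icc_subset_Icc (by linarith) le_rfl
  have hBpos : 0 < ∫ x in z₁..z₂, N x := by
    have hsplitN : (∫ x in z₁..z₂, N x) = ((∫ x in z₁..x₀, N x) + ∫ x in x₀..y₀, N x)
        + ∫ x in y₀..z₂, N x := by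
      rw [intervalIntegral.integral_add_adjacent_intervals iN1 hNmid_int,
        intervalIntegral.integral_add_adjacent_intervals (iN1.trans hNmid_int) iN3]
    have n1 : 0 ≤ ∫ x in z₁..x₀, N x :=
      intervalIntegral.integral_nonneg hx₀1 (fun x _ => hNnonneg x)
    have n3 : 0 ≤ ∫ x in y₀..z₂, N x :=
      intervalIntegral.integral_nonneg hy₀2 (fun x _ => hNnonneg x)
    rw [hsplitN]; linarith
  -- Poincaré inequality
  have hPoin := poincareC hz h hd hder hhdc hh1 hh2
  -- min of f2 and max of β
  set m := sInf (f2 '' Set.Icc z₁ z₂) with hmdef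
  have himgne : (f2 '' Set.Icc z₁ z₂).Nonempty :=
    ⟨_, Set.mem_image_of_mem f2 (Set.left_mem_Icc.mpr hzle)⟩
  have hcpt : IsCompact (f2 '' Set.Icc z₁ z₂) := isCompact_Icc.image_of_continuousOn hf2c
  have hm_mem : m ∈ f2 '' Set.Icc z₁ z₂ := hcpt.sInf_mem himgne
  have hmle : ∀ z ∈ Set.Icc z₁ z₂, m ≤ f2 z := fun z hz' =>
    csInf_le hcpt.bddBelow (Set.mem_image_of_mem f2 hz')
  obtain ⟨zm, hzmI, hzm⟩ := hm_mem
  have hmpos : 0 < m := by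
    rw [← hzm]
    have hne' : u zm - c ≠ 0 := sub_ne_zero.mpr (hne zm hzmI)
    simp only [hf2def]
    positivity
  set βm := sSup (β '' Set.Icc z₁ z₂) with hβmdef
  have hβcpt : IsCompact (β '' Set.Icc z₁ z₂) := isCompact_Icc.image_of_continuousOn hβ
  have hβle : ∀ z ∈ Set.Icc z₁ z₂, β z ≤ βm := fun z hz' =>
    le_csSup hβcpt.bddAbove (Set.mem_image_of_mem β hz')
  -- integral comparisons
  have imA : m * (∫ x in z₁..z₂, M x) ≤ ∫ x in z₁..z₂, f2 x * M x := by
    rw [← intervalIntegral.integral_const_mul]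
    apply intervalIntegral.integral_mono_on hzle (iM.const_mul m) if2M
    intro x hx; exact mul_le_mul_of_nonneg_right (hmle x hx) (hMnonneg x)
  have imB : m * (∫ x in z₁..z₂, N x) ≤ ∫ x in z₁..z₂, f2 x * N x := by
    rw [← intervalIntegral.integral_const_mul]
    apply intervalIntegral.integral_mono_on hzle (iN.const_mul m) if2N
    intro x hx; exact mul_le_mul_of_nonneg_right (hmle x hx) (hNnonneg x)
  have iβ : (∫ x in z₁..z₂, β x * N x) ≤ βm * ∫ x in z₁..z₂, N x := by
    rw [← intervalIntegral.integral_const_mul]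
    apply intervalIntegral.integral_mono_on hzle iβN (iN.const_mul βm)
    intro x hx; exact mul_le_mul_of_nonneg_right (hβle x hx) (hNnonneg x)
  -- chain of inequalities
  have h1c : m * ((π/(z₂ - z₁))^2 * ∫ x in z₁..z₂, N x) ≤ m * ∫ x in z₁..z₂, M x :=
    mul_le_mul_of_nonneg_left hPoin hmpos.le
  have h2c : k^2 * (m * ∫ x in z₁..z₂, N x) ≤ k^2 * ∫ x in z₁..z₂, f2 x * N x :=
    mul_le_mul_of_nonneg_left imB (by positivity)
  have h3c : g * (∫ x in z₁..z₂, β x * N x) ≤ g * (βm * ∫ x in z₁..z₂, N x) :=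
    mul_le_mul_of_nonneg_left iβ hg.le
  have hfinal : m * ((π/(z₂ - z₁))^2 + k^2) ≤ g * βm := by
    apply le_of_mul_le_mul_right _ hBpos
    have hgeq : g * (∫ x in z₁..z₂, β x * N x)
        = (∫ x in z₁..z₂, f2 x * M x) + k^2 * (∫ x in z₁..z₂, f2 x * N x) := hmain.symm
    linarith [h1c, h2c, h3c, imA, hgeq]
  have hstrict : m * (π/(z₂ - z₁))^2 < g * βm := by
    have hmk : 0 < m * k^2 := mul_pos hmpos (pow_pos hk 2)
    nlinarith [hfinal, hmk]
  have hgβ : 0 < g * βm := lt_trans (mul_pos hmpos (pow_pos (div_pos Real.pi_pos (by linarith)) 2)) hstrict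
  have hL : (0:ℝ) < z₂ - z₁ := by linarith
  -- first conclusion
  have goal1 : m < g * βm * (z₂ - z₁)^2 / π^2 := by
    rw [lt_div_iff₀ (by positivity : (0:ℝ) < π^2)]
    have hkey : (m * (π/(z₂ - z₁))^2) * (z₂ - z₁)^2 < (g * βm) * (z₂ - z₁)^2 :=
      mul_lt_mul_of_pos_right hstrict (by positivity)
    calc m * π^2 = (m * (π/(z₂ - z₁))^2) * (z₂ - z₁)^2 := by field_simp
      _ < (g * βm) * (z₂ - z₁)^2 := hkey
      _ = g * βm * (z₂ - z₁)^2 := by ring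
  -- second and third conclusions
  set α := Real.sqrt (g * βm) * (z₂ - z₁) / π with hαdef
  have hα2 : α^2 = g * βm * (z₂ - z₁)^2 / π^2 := by
    rw [hαdef, div_pow, mul_pow, Real.sq_sqrt hgβ.le]
  have hzm2 : (u zm - c)^2 < α^2 := by
    rw [hα2]
    have : f2 zm = (u zm - c)^2 := rfl
    rw [← this, hzm]
    exact goal1
  have hαpos : 0 < α := by
    rw [hαdef]
    exact div_pos (mul_pos (Real.sqrt_pos.mpr hgβ) hL) pi_pos
  have hlt1 : u zm - c < α := by nlinarith [hzm2, hαpos]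
  have hlt2 : -α < u zm - c := by nlinarith [hzm2, hαpos]
  have huimg : IsCompact (u '' Set.Icc z₁ z₂) := isCompact_Icc.image_of_continuousOn hucont'
  have hinfle : sInf (u '' Set.Icc z₁ z₂) ≤ u zm :=
    csInf_le huimg.bddBelow (Set.mem_image_of_mem u hzmI)
  have hlesup : u zm ≤ sSup (u '' Set.Icc z₁ z₂) :=
    le_csSup huimg.bddAbove (Set.mem_image_of_mem u hzmI)
  exact ⟨goal1, by linarith, by linarith⟩
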